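/- Let p be an odd prime and a, b, c ∈ 𝔽_p with a ≠ 0, b = 0 and c ≠ 0. Then D(φ,p) = p − 1, and the only extremal φ-zero-free sequence (i.e., φ-zero-free multiset of cardinality p − 2) is [c·a⁻¹]^{p−2}. -/

import Mathlib

/-- `phi a b c S = a·(∑_{x∈S} x)² + b·(∑_{x∈S} x²) + c·(∑_{x∈S} x)`,
sums taken with multiplicity. -/
def phi {p : ℕ} (a b c : ZMod p) (S : Multiset (ZMod p)) : ZMod p :=
  a * S.sum ^ 2 + b * (S.map (fun x => x ^ 2)).sum + c * S.sum

/-- `S` is φ-zero-free: no nonempty submultiset `T` of `S` has `phi a b c T = 0`. -/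
def PhiZeroFree {p : ℕ} (a b c : ZMod p) (S : Multiset (ZMod p)) : Prop :=
  ∀ T : Multiset (ZMod p), T ≤ S → T ≠ 0 → phi a b c T ≠ 0

lemma myPhiZeroIff {p : ℕ} (hp : p.Prime) (a c : ZMod p) (ha : a ≠ 0)
    (T : Multiset (ZMod p)) :
    phi a 0 c T = 0 ↔ T.sum = 0 ∨ T.sum = -(c * a⁻¹) := by
  haveI : Fact p.Prime := ⟨hp⟩
  have hfact : phi a 0 c T = a * T.sum * (T.sum + c * a⁻¹) := by
    simp only [phi]
    field_simp
    ring
  rw [hfact, mul_eq_zero, mul_eq_zero]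
  constructor
  · rintro ((h | h) | h)
    · exact absurd h ha
    · exact Or.inl h
    · exact Or.inr (eq_neg_of_add_eq_zero_left h)
  · rintro (h | h)
    · exact Or.inl (Or.inr h)
    · right
      rw [h, neg_add_cancel]

lemma myZfReplicate {p : ℕ} (hp : p.Prime) (hp3 : 3 ≤ p) (a c : ZMod p)
    (ha : a ≠ 0) (hc : c ≠ 0) :
    PhiZeroFree a 0 c (Multiset.replicate (p - 2) (c * a⁻¹)) := by
  haveI : Fact p.Prime := ⟨hp⟩
  intro T hT hT0
  set u := c * a⁻¹ with hu_def
  have hu : u ≠ 0 := mul_ne_zero hc (inv_ne_zero ha)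
  have hTr : T = Multiset.replicate (Multiset.card T) u :=
    Multiset.eq_replicate.2 ⟨rfl, fun b hb =>
      Multiset.eq_of_mem_replicate (Multiset.mem_of_le hT hb)⟩
  have hm : Multiset.card T ≤ p - 2 := by
    have := Multiset.card_le_card hT
    simpa using this
  have hm1 : 1 ≤ Multiset.card T := Multiset.card_pos.2 hT0
  set m := Multiset.card T with hm_def
  have hsum : T.sum = (m : ZMod p) * u := by
    rw [hTr, Multiset.sum_replicate, nsmul_eq_mul]
  have hm0 : (m : ZMod p) ≠ 0 := by
    rw [Ne, ZMod.natCast_eq_zero_iff]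
    intro hdvd
    have := Nat.le_of_dvd (by omega) hdvd
    omega
  rw [Ne, myPhiZeroIff hp a c ha]
  push_neg
  constructor
  · rw [hsum]
    exact mul_ne_zero hm0 hu
  · rw [hsum, ← hu_def]
    intro h
    have h2 : ((m : ZMod p) + 1) * u = 0 := by
      rw [add_mul, one_mul, h, neg_add_cancel]
    have h3 : ((m + 1 : ℕ) : ZMod p) = 0 := by
      push_cast
      exact (mul_eq_zero.1 h2).resolve_right hu
    rw [ZMod.natCast_eq_zero_iff] at h3
    have := Nat.le_of_dvd (by omega) h3
    omega

section Subsums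

variable {p : ℕ}

def subsums (S : Multiset (ZMod p)) : Finset (ZMod p) :=
  (S.powerset.map Multiset.sum).toFinset

lemma mem_subsums {S : Multiset (ZMod p)} {z : ZMod p} :
    z ∈ subsums S ↔ ∃ T, T ≤ S ∧ T.sum = z := by
  simp [subsums, Multiset.mem_powerset]

lemma zero_mem_subsums (S : Multiset (ZMod p)) : (0 : ZMod p) ∈ subsums S :=
  mem_subsums.2 ⟨0, Multiset.zero_le S, rfl⟩

lemma subsums_cons (x : ZMod p) (s : Multiset (ZMod p)) :
    subsums (x ::ₘ s) = subsums s ∪ (subsums s).image (x + ·) := by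
  simp only [subsums, Multiset.powerset_cons, Multiset.map_add, Multiset.toFinset_add,
    Multiset.map_map, Function.comp_def, Multiset.sum_cons]
  congr 1
  rw [show (fun t : Multiset (ZMod p) => x + t.sum) = (fun z => x + z) ∘ Multiset.sum from rfl,
    ← Multiset.map_map, Multiset.toFinset_map]

lemma subsums_mono {s t : Multiset (ZMod p)} (h : s ≤ t) : subsums s ⊆ subsums t := by
  intro z hz
  rcases mem_subsums.1 hz with ⟨T, hT, rfl⟩
  exact mem_subsums.2 ⟨T, hT.trans h, rfl⟩

lemma mySubsumsClosureUniv (hp : p.Prime) (x : ZMod p) (hx : x ≠ 0) (A : Finset (ZMod p))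
    (h0 : (0 : ZMod p) ∈ A) (hcl : ∀ z ∈ A, x + z ∈ A) : ∀ z : ZMod p, z ∈ A := by
  haveI : Fact p.Prime := ⟨hp⟩
  have hn : ∀ n : ℕ, (n : ZMod p) * x ∈ A := by
    intro n
    induction n with
    | zero => simpa using h0
    | succ n ih =>
      have := hcl _ ih
      convert this using 1
      push_cast
      ring
  intro z
  haveI : NeZero p := ⟨hp.ne_zero⟩
  obtain ⟨n, hn'⟩ := ZMod.natCast_rightInverse.surjective (z * x⁻¹)
  have : (n : ZMod p) * x = z := by
    rw [hn', mul_assoc, inv_mul_cancel₀ hx, mul_one]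
  exact this ▸ hn n

lemma subsums_card_step (hp : p.Prime) (x : ZMod p) (s : Multiset (ZMod p))
    (hzf : ∀ T ≤ x ::ₘ s, T ≠ 0 → Multiset.sum T ≠ 0) :
    (subsums s).card + 1 ≤ (subsums (x ::ₘ s)).card := by
  have hx : x ≠ 0 := by
    have := hzf {x} (by
      simpa using Multiset.cons_le_cons x (Multiset.zero_le s)) (by simp)
    simpa using this
  by_contra hlt
  push_neg at hlt
  have hsub : subsums s ⊆ subsums (x ::ₘ s) := subsums_mono (Multiset.le_cons_self s x)
  have heq : subsums s = subsums (x ::ₘ s) :=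
    Finset.eq_of_subset_of_card_le hsub (by omega)
  have hcl : ∀ z ∈ subsums s, x + z ∈ subsums s := by
    intro z hz
    rw [heq, subsums_cons]
    exact Finset.mem_union_right _ (Finset.mem_image_of_mem _ hz)
  have huniv := mySubsumsClosureUniv hp x hx _ (zero_mem_subsums s) hcl
  rcases mem_subsums.1 (huniv (-x)) with ⟨T, hT, hTsum⟩
  have hT0 : T ≠ 0 := by
    rintro rfl
    simp at hTsum
    exact hx hTsum
  have : (x ::ₘ T) ≤ x ::ₘ s := Multiset.cons_le_cons x hT
  exact hzf (x ::ₘ T) this (by simp) (by simp [hTsum])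

lemma subsums_card_ge (hp : p.Prime) (s : Multiset (ZMod p))
    (hzf : ∀ T ≤ s, T ≠ 0 → Multiset.sum T ≠ 0) :
    Multiset.card s + 1 ≤ (subsums s).card := by
  induction s using Multiset.induction with
  | empty => simpa using Finset.card_pos.2 ⟨0, zero_mem_subsums 0⟩
  | cons x s ih =>
    have ih' := ih (fun T hT h0 => hzf T (hT.trans (Multiset.le_cons_self s x)) h0)
    have := subsums_card_step hp x s hzf
    simp only [Multiset.card_cons]
    omega

lemma subsums_card_ge_two (hp : p.Prime) :
    ∀ (n : ℕ) (s : Multiset (ZMod p)), Multiset.card s = n + 2 →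
    (∀ T ≤ s, T ≠ 0 → Multiset.sum T ≠ 0) →
    ∀ x ∈ s, ∀ y ∈ s, x ≠ y → n + 4 ≤ (subsums s).card := by
  intro n
  induction n with
  | zero =>
    intro s hcard hzf x hx y hy hxy
    obtain ⟨t, rfl⟩ := Multiset.exists_cons_of_mem hx
    have hyt : y ∈ t := by
      rcases Multiset.mem_cons.1 hy with h | h
      · exact absurd h.symm hxy
      · exact h
    have hts : Multiset.card t = 1 := by simpa using hcard
    obtain ⟨w, rfl⟩ := Multiset.card_eq_one.1 hts
    have hw : y = w := by simpa using hyt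
    subst hw
    have hx0 : x ≠ 0 := by
      have := hzf {x} (by simpa using Multiset.cons_le_cons x (Multiset.zero_le _)) (by simp)
      simpa using this
    have hy0 : y ≠ 0 := by
      have := hzf {y} (Multiset.le_cons_self _ _) (by simp)
      simpa using this
    have hxy0 : x + y ≠ 0 := by
      have := hzf (x ::ₘ {y}) le_rfl (by simp)
      simpa using this
    have hsub : ({0, x, y, x + y} : Finset (ZMod p)) ⊆ subsums (x ::ₘ {y}) := by
      simp only [Finset.insert_subset_iff, Finset.singleton_subset_iff]
      exact ⟨zero_mem_subsums _,
        mem_subsums.2 ⟨{x}, by simpa using Multiset.cons_le_cons x (Multiset.zero_le _), by simp⟩,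
        mem_subsums.2 ⟨{y}, Multiset.le_cons_self _ _, by simp⟩,
        mem_subsums.2 ⟨x ::ₘ {y}, le_rfl, by simp⟩⟩
    have hcard4 : ({0, x, y, x + y} : Finset (ZMod p)).card = 4 := by
      rw [Finset.card_insert_of_notMem (by
          simp only [Finset.mem_insert, Finset.mem_singleton]
          push_neg
          exact ⟨Ne.symm hx0, Ne.symm hy0, Ne.symm hxy0⟩),
        Finset.card_insert_of_notMem (by
          simp only [Finset.mem_insert, Finset.mem_singleton]
          push_neg
          refine ⟨hxy, fun h => hy0 ?_⟩
          exact (left_eq_add.1 h)),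
        Finset.card_insert_of_notMem (by
          simp only [Finset.mem_singleton]
          intro h
          exact hx0 (right_eq_add.1 h)),
        Finset.card_singleton]
    calc (0 : ℕ) + 4 = ({0, x, y, x + y} : Finset (ZMod p)).card := by omega
      _ ≤ _ := Finset.card_le_card hsub
  | succ n ih =>
    intro s hcard hzf x hx y hy hxy
    have key : ∃ z ∈ s, x ∈ s.erase z ∧ y ∈ s.erase z := by
      by_cases h2x : 2 ≤ s.count x
      · refine ⟨x, hx, ?_, (Multiset.mem_erase_of_ne hxy.symm).2 hy⟩
        rw [← Multiset.count_pos, Multiset.count_erase_self]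
        omega
      · by_cases h2y : 2 ≤ s.count y
        · refine ⟨y, hy, (Multiset.mem_erase_of_ne hxy).2 hx, ?_⟩
          rw [← Multiset.count_pos, Multiset.count_erase_self]
          omega
        · have hcx : s.count x = 1 := by
            have := Multiset.count_pos.2 hx; omega
          have hcy : s.count y = 1 := by
            have := Multiset.count_pos.2 hy; omega
          have hyex : y ∈ s.erase x := (Multiset.mem_erase_of_ne hxy.symm).2 hy
          have hcard' : Multiset.card ((s.erase x).erase y) = n + 1 := by
            rw [Multiset.card_erase_of_mem hyex, Multiset.card_erase_of_mem hx, hcard]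
            simp only [Nat.pred_eq_sub_one]
            omega
          obtain ⟨z, hz⟩ := Multiset.card_pos_iff_exists_mem.1
            (by omega : 0 < Multiset.card ((s.erase x).erase y))
          have hzs : z ∈ s := Multiset.mem_of_mem_erase (Multiset.mem_of_mem_erase hz)
          have hzx : z ≠ x := by
            rintro rfl
            have hmem : z ∈ s.erase z := Multiset.mem_of_mem_erase hz
            have hpos := Multiset.count_pos.2 hmem
            rw [Multiset.count_erase_self, hcx] at hpos
            omega
          have hzy : z ≠ y := by
            rintro rfl
            have hpos := Multiset.count_pos.2 hz
            rw [Multiset.count_erase_self, Multiset.count_erase_of_ne hzx] at hpos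
            omega
          exact ⟨z, hzs, (Multiset.mem_erase_of_ne (Ne.symm hzx)).2 hx,
            (Multiset.mem_erase_of_ne (Ne.symm hzy)).2 hy⟩
    obtain ⟨z, hz, hxz, hyz⟩ := key
    have hcons : z ::ₘ s.erase z = s := Multiset.cons_erase hz
    have hcard' : Multiset.card (s.erase z) = n + 2 := by
      rw [Multiset.card_erase_of_mem hz, hcard]
      simp only [Nat.pred_eq_sub_one]
      omega
    have hzf' : ∀ T ≤ s.erase z, T ≠ 0 → Multiset.sum T ≠ 0 := fun T hT h0 =>
      hzf T (hT.trans (Multiset.erase_le z s)) h0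
    have hih := ih (s.erase z) hcard' hzf' x hxz y hyz hxy
    have hstep := subsums_card_step hp z (s.erase z) (by rw [hcons]; exact hzf)
    rw [hcons] at hstep
    omega

end Subsums

/-- The set of positive lengths `ℓ` such that every multiset over `ZMod p` of
cardinality at least `ℓ` has a nonempty submultiset `T` with `phi a b c T = 0`.
The Davenport φ-constant `D(φ,p)` is the least element of this set. -/
def DavSet {p : ℕ} (a b c : ZMod p) : Set ℕ :=
  {ℓ : ℕ | 0 < ℓ ∧ ∀ S : Multiset (ZMod p), ℓ ≤ Multiset.card S →
    ∃ T : Multiset (ZMod p), T ≤ S ∧ T ≠ 0 ∧ phi a b c T = 0}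

/-- Theorem 1(iii): if `a ≠ 0`, `b = 0` and `c ≠ 0` then `D(φ,p) = p - 1` and the
only extremal φ-zero-free sequence is `[c·a⁻¹]^(p-2)`. -/
theorem davenport_phi_b_zero (p : ℕ) (hp : p.Prime) (hodd : Odd p)
    (a b c : ZMod p) (ha : a ≠ 0) (hb : b = 0) (hc : c ≠ 0) :
    IsLeast (DavSet a b c) (p - 1) ∧
    ∀ S : Multiset (ZMod p),
      (PhiZeroFree a b c S ∧ Multiset.card S = p - 2) ↔
        S = Multiset.replicate (p - 2) (c * a⁻¹) := by
  subst hb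
  haveI : Fact p.Prime := ⟨hp⟩
  haveI : NeZero p := ⟨hp.ne_zero⟩
  have hp3 : 3 ≤ p := by
    have h2 := hp.two_le
    have hm := Nat.odd_iff.1 hodd
    omega
  set u := c * a⁻¹ with hu_def
  have hu : u ≠ 0 := mul_ne_zero hc (inv_ne_zero ha)
  have hv : -u ≠ 0 := neg_ne_zero.2 hu
  constructor
  · constructor
    · -- p - 1 ∈ DavSet
      refine ⟨by omega, fun S hS => ?_⟩
      by_cases h0 : ∃ T, T ≤ S ∧ T ≠ 0 ∧ Multiset.sum T = 0
      · obtain ⟨T, hT, hT0, hsum⟩ := h0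
        exact ⟨T, hT, hT0, (myPhiZeroIff hp a c ha T).2 (Or.inl hsum)⟩
      · push_neg at h0
        have hzs : ∀ T ≤ S, T ≠ 0 → Multiset.sum T ≠ 0 := fun T hT hT0 => h0 T hT hT0
        have hge := subsums_card_ge hp S hzs
        have hle : (subsums S).card ≤ p := by
          have := Finset.card_le_univ (subsums S)
          simpa [ZMod.card] using this
        have huniv : subsums S = Finset.univ := by
          apply Finset.eq_univ_of_card
          rw [ZMod.card]
          omega
        have hmem : -u ∈ subsums S := huniv ▸ Finset.mem_univ _
        obtain ⟨T, hT, hsum⟩ := mem_subsums.1 hmem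
        have hT0 : T ≠ 0 := by
          rintro rfl
          simp only [Multiset.sum_zero] at hsum
          exact hv hsum.symm
        exact ⟨T, hT, hT0, (myPhiZeroIff hp a c ha T).2 (Or.inr hsum)⟩
    · -- lower bound
      intro ℓ hℓ
      by_contra hlt
      push_neg at hlt
      obtain ⟨hpos, hall⟩ := hℓ
      obtain ⟨T, hT, hT0, hphi0⟩ := hall (Multiset.replicate (p - 2) u)
        (by rw [Multiset.card_replicate]; omega)
      exact myZfReplicate hp hp3 a c ha hc T hT hT0 hphi0
  · intro S
    constructor
    · rintro ⟨hzf, hcard⟩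
      have hzs : ∀ T ≤ S, T ≠ 0 → Multiset.sum T ≠ 0 := fun T hT hT0 hsum =>
        hzf T hT hT0 ((myPhiZeroIff hp a c ha T).2 (Or.inl hsum))
      have hvs : -u ∉ subsums S := by
        intro hmem
        obtain ⟨T, hT, hsum⟩ := mem_subsums.1 hmem
        have hT0 : T ≠ 0 := by
          rintro rfl
          simp only [Multiset.sum_zero] at hsum
          exact hv hsum.symm
        exact hzf T hT hT0 ((myPhiZeroIff hp a c ha T).2 (Or.inr hsum))
      have hcardle : (subsums S).card ≤ p - 1 := by
        have hsubset : subsums S ⊆ Finset.univ.erase (-u) := fun z hz =>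
          Finset.mem_erase.2 ⟨fun h => hvs (h ▸ hz), Finset.mem_univ z⟩
        have := Finset.card_le_card hsubset
        rwa [Finset.card_erase_of_mem (Finset.mem_univ _), Finset.card_univ, ZMod.card] at this
      have hconst : ∀ x ∈ S, ∀ y ∈ S, x = y := by
        intro x hx y hy
        by_contra hxy
        have hyx : y ∈ S.erase x := (Multiset.mem_erase_of_ne (fun h => hxy h.symm)).2 hy
        have h1 : 0 < Multiset.card (S.erase x) :=
          Multiset.card_pos.2 (fun h => by simp [h] at hyx)
        have h2card : 2 ≤ Multiset.card S := by
          rw [← Multiset.cons_erase hx, Multiset.card_cons]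
          omega
        have hge := subsums_card_ge_two hp (p - 4) S (by omega) hzs x hx y hy hxy
        omega
      have hS0 : S ≠ 0 := by
        intro h
        rw [h] at hcard
        simp at hcard
        omega
      obtain ⟨x₀, hx₀⟩ := Multiset.exists_mem_of_ne_zero hS0
      have hSrep : S = Multiset.replicate (p - 2) x₀ :=
        Multiset.eq_replicate.2 ⟨hcard, fun b hb => hconst b hb x₀ hx₀⟩
      suffices hx0u : x₀ = u by rw [hSrep, hx0u]
      by_contra hne
      have hx00 : x₀ ≠ 0 := by
        have := hzs {x₀} (Multiset.singleton_le.2 hx₀) (by simp)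
        simpa using this
      set w := -u * x₀⁻¹ with hw_def
      have hw0 : w ≠ 0 := mul_ne_zero hv (inv_ne_zero hx00)
      have hwm1 : w ≠ -1 := by
        intro h
        apply hne
        have h2 := congrArg (· * x₀) h
        change w * x₀ = -1 * x₀ at h2
        rw [hw_def] at h2
        rw [mul_assoc, inv_mul_cancel₀ hx00, mul_one, neg_one_mul] at h2
        exact (neg_injective h2).symm
      have hvalcast : ((w.val : ℕ) : ZMod p) = w := by
        rw [ZMod.natCast_val, ZMod.cast_id]
      have hval_lt : w.val < p := ZMod.val_lt w
      have hval0 : w.val ≠ 0 := fun h => hw0 (by rw [← hvalcast, h, Nat.cast_zero])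
      have hvalp1 : w.val ≠ p - 1 := by
        intro h
        apply hwm1
        rw [← hvalcast, h]
        have : ((p - 1 : ℕ) : ZMod p) = (p : ZMod p) - 1 := by
          push_cast [Nat.cast_sub (by omega : 1 ≤ p)]
          ring
        rw [this, ZMod.natCast_self, zero_sub]
      have hT : Multiset.replicate w.val x₀ ≤ S := by
        rw [hSrep]
        exact (Multiset.replicate_le_replicate x₀).2 (by omega)
      have hTsum : (Multiset.replicate w.val x₀).sum = -u := by
        rw [Multiset.sum_replicate, nsmul_eq_mul, hvalcast, hw_def, mul_assoc,
          inv_mul_cancel₀ hx00, mul_one]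
      have hT0 : Multiset.replicate w.val x₀ ≠ 0 := by
        intro h
        have h2 : w.val = 0 := by simpa using congrArg Multiset.card h
        exact hval0 h2
      exact hzf _ hT hT0 ((myPhiZeroIff hp a c ha _).2 (Or.inr hTsum))
    · rintro rfl
      exact ⟨myZfReplicate hp hp3 a c ha hc, by rw [Multiset.card_replicate]⟩
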